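/- Let f : S¹ → S¹ be an orientation preserving homeomorphism with no periodic point. Then for every x ∈ S¹ the nonwandering set Ω(f) equals the ω-limit set ω(x) and equals the α-limit set α(x). -/
import Mathlib


/-- The circle, as `ℝ/ℤ`. -/
abbrev S1 : Type := AddCircle (1 : ℝ)

/-- A circle homeomorphism is orientation preserving if it has a continuous strictly
monotone increasing lift commuting with the deck translation `x ↦ x + 1`. -/
def OrientationPreserving (f : S1 ≃ₜ S1) : Prop :=
  ∃ F : ℝ → ℝ, StrictMono F ∧ Continuous F ∧ (∀ x : ℝ, F (x + 1) = F x + 1) ∧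
    ∀ x : ℝ, f ((x : ℝ) : S1) = ((F x : ℝ) : S1)

/-- The `k`-th iterate of a homeomorphism, for `k : ℤ`. -/
noncomputable def zIter (f : S1 ≃ₜ S1) (k : ℤ) : S1 → S1 :=
  if 0 ≤ k then (⇑f)^[k.toNat] else (⇑f.symm)^[(-k).toNat]

/-- `f` has no periodic point. -/
def NoPeriodicPoint (f : S1 ≃ₜ S1) : Prop :=
  ∀ (x : S1) (n : ℕ), 1 ≤ n → (⇑f)^[n] x ≠ x

/-- `x` is a nonwandering point of `f`: every neighborhood `U` of `x` meets `f^k(U)`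
for some nonzero integer `k`. -/
def IsNonwandering (f : S1 ≃ₜ S1) (x : S1) : Prop :=
  ∀ U ∈ nhds x, ∃ k : ℤ, k ≠ 0 ∧ (zIter f k '' U ∩ U).Nonempty

/-- The nonwandering set `Ω(f)`. -/
def nonwanderingSet (f : S1 ≃ₜ S1) : Set S1 := {x | IsNonwandering f x}

/-- The ω-limit set of the orbit of `x`. -/
def omegaSet (f : S1 ≃ₜ S1) (x : S1) : Set S1 :=
  ⋂ n : ℕ, closure {y | ∃ k ≥ n, (⇑f)^[k] x = y}

/-- The α-limit set of the orbit of `x`. -/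
def alphaSet (f : S1 ≃ₜ S1) (x : S1) : Set S1 :=
  ⋂ n : ℕ, closure {y | ∃ k ≥ n, (⇑f.symm)^[k] x = y}

namespace CircleAux

open Set

/-- The projection ℝ → S¹. -/
noncomputable abbrev pc (t : ℝ) : S1 := ((t : ℝ) : S1)

lemma pc_add_int (t : ℝ) (p : ℤ) : pc (t + p) = pc t := by
  have h0 : pc (p : ℝ) = 0 := by
    show ((p : ℝ) : S1) = 0
    rw [AddCircle.coe_eq_zero_iff]
    exact ⟨p, by simp⟩
  have : pc (t + p) = pc t + pc (p : ℝ) := rfl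
  rw [this, h0, add_zero]

lemma pc_neg (t : ℝ) : pc (-t) = -pc t := rfl

lemma add_int_comm (G : ℝ → ℝ) (h1 : ∀ t, G (t + 1) = G t + 1) :
    ∀ (p : ℤ) (t : ℝ), G (t + p) = G t + p := by
  have hn : ∀ (n : ℕ) (t : ℝ), G (t + n) = G t + n := by
    intro n
    induction n with
    | zero => simp
    | succ n ih =>
      intro t
      have : (t + (n + 1) : ℝ) = (t + n) + 1 := by push_cast; ring
      rw [show ((n + 1 : ℕ) : ℝ) = (n : ℝ) + 1 by push_cast; ring]
      calc G (t + ((n : ℝ) + 1)) = G ((t + n) + 1) := by ring_nf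
        _ = G (t + n) + 1 := h1 _
        _ = G t + n + 1 := by rw [ih]
        _ = G t + ((n : ℝ) + 1) := by ring
  intro p t
  rcases le_or_gt 0 p with hp | hp
  · lift p to ℕ using hp
    exact_mod_cast hn p t
  · have hp' : 0 ≤ -p := by omega
    lift (-p) to ℕ using hp' with m hm
    have : G ((t + p) + m) = G (t + p) + m := hn m _
    have hmp : (m : ℝ) = -(p : ℝ) := by exact_mod_cast congrArg (fun z : ℤ => (z : ℝ)) hm
    rw [hmp] at this
    have h2 : G (t + (p:ℝ) + -(p:ℝ)) = G t := by ring_nf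
    rw [h2] at this
    linarith

lemma iter_add_one (F : ℝ → ℝ) (hF1 : ∀ t, F (t + 1) = F t + 1) :
    ∀ (K : ℕ) (t : ℝ), F^[K] (t + 1) = F^[K] t + 1 := by
  intro K
  induction K with
  | zero => simp
  | succ m ih =>
    intro t
    rw [Function.iterate_succ_apply', Function.iterate_succ_apply', ih, hF1]

lemma gap_pos (G : ℝ → ℝ) (hc : Continuous G) (h1 : ∀ t, G (t + 1) = G t + 1)
    (hlt : ∀ t, t < G t) : ∃ δ > 0, ∀ t, t + δ ≤ G t := by
  obtain ⟨t₀, ht₀, hmin⟩ := isCompact_Icc.exists_isMinOn (Set.nonempty_Icc.2 zero_le_one)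
      ((hc.sub continuous_id).continuousOn : ContinuousOn (fun t => G t - t) (Icc (0:ℝ) 1))
  refine ⟨G t₀ - t₀, sub_pos.2 (hlt t₀), fun t => ?_⟩
  have hfr : Int.fract t ∈ Icc (0:ℝ) 1 := ⟨Int.fract_nonneg t, (Int.fract_lt_one t).le⟩
  have h2 : G t₀ - t₀ ≤ G (Int.fract t) - Int.fract t := hmin hfr
  have h3 : G (Int.fract t + (⌊t⌋ : ℝ)) = G (Int.fract t) + ⌊t⌋ := add_int_comm G h1 ⌊t⌋ _
  have h4 : Int.fract t + (⌊t⌋ : ℝ) = t := Int.fract_add_floor t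
  rw [h4] at h3
  have := Int.fract_add_floor t
  linarith

lemma lemE (G : ℝ → ℝ) (hc : Continuous G) (h1 : ∀ t, G (t + 1) = G t + 1)
    (hlt : ∀ t, t < G t) (a : ℝ) (n : ℕ) (s : ℝ) (hs : G^[n] a < s) :
    ∃ j ≥ n, ∃ t ∈ Icc a (G a), G^[j] t = s := by
  classical
  obtain ⟨δ, hδ, hgap⟩ := gap_pos G hc h1 hlt
  have hstep : ∀ j : ℕ, G^[j] a + δ ≤ G^[j+1] a := fun j => by
    rw [Function.iterate_succ_apply']; exact hgap _
  have hmono : Monotone (fun j : ℕ => G^[j] a) :=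
    (strictMono_nat_of_lt_succ (fun j => by
      rw [Function.iterate_succ_apply']; exact hlt _)).monotone
  have hlow : ∀ j : ℕ, a + j * δ ≤ G^[j] a := by
    intro j
    induction j with
    | zero => simp
    | succ j ih =>
      have := hstep j
      push_cast
      push_cast at ih
      linarith
  obtain ⟨J, hJ⟩ := exists_nat_ge ((s - a) / δ)
  have hPJ : s ≤ G^[J] a := by
    have : s - a ≤ J * δ := by rwa [div_le_iff₀ hδ] at hJ
    linarith [hlow J]
  have hex : ∃ j, s ≤ G^[j] a := ⟨J, hPJ⟩
  set N := Nat.find hex with hNdef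
  have hN : s ≤ G^[N] a := Nat.find_spec hex
  have hNn : n < N := by
    by_contra h
    push_neg at h
    have : G^[N] a ≤ G^[n] a := hmono h
    linarith
  have hNpos : 0 < N := lt_of_le_of_lt (Nat.zero_le n) hNn
  set j := N - 1 with hjdef
  have hjN : j + 1 = N := Nat.succ_pred_eq_of_pos hNpos
  have hja : G^[j] a < s := by
    have := Nat.find_min hex (show j < N by omega)
    push_neg at this
    exact this
  have hjb : s ≤ G^[j] (G a) := by
    have h := hN
    rw [← hjN, Function.iterate_succ_apply] at h
    exact h
  have hsub := intermediate_value_Icc (le_of_lt (hlt a)) ((hc.iterate j).continuousOn)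
  obtain ⟨t, ht, hts⟩ := hsub ⟨hja.le, hjb⟩
  exact ⟨j, by omega, t, ht, hts⟩

/-- Key covering lemma: if `G` is a continuous lift-type map above the identity which
semiconjugates (via the projection) to `gg`, then the backward `gg`-orbit of any point
enters the projection of `[a, G a]` at arbitrarily large times. -/
lemma lemF (gg : S1 → S1) (G : ℝ → ℝ) (hc : Continuous G) (h1 : ∀ t, G (t + 1) = G t + 1)
    (hlt : ∀ t, t < G t) (hsc : ∀ t : ℝ, pc (G t) = gg (pc t))
    (a : ℝ) (V : Set S1) (hV : ∀ t ∈ Icc a (G a), pc t ∈ V) (x : S1) (n : ℕ) :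
    ∃ j ≥ n, ∃ y ∈ V, gg^[j] y = x := by
  obtain ⟨s₀, hs₀⟩ : ∃ s₀ : ℝ, pc s₀ = x := QuotientAddGroup.mk_surjective x
  set p : ℤ := ⌊G^[n] a - s₀⌋ + 1 with hpdef
  set s := s₀ + p with hsdef
  have hsx : pc s = x := by rw [hsdef, pc_add_int, hs₀]
  have hgt : G^[n] a < s := by
    have h2 := Int.lt_floor_add_one (G^[n] a - s₀)
    have : (p : ℝ) = (⌊G^[n] a - s₀⌋ : ℝ) + 1 := by rw [hpdef]; push_cast; ring
    rw [hsdef, this]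
    linarith
  obtain ⟨j, hj, t, ht, hts⟩ := lemE G hc h1 hlt a n s hgt
  have hsemi : Function.Semiconj pc G gg := hsc
  have hiter := hsemi.iterate_right j
  refine ⟨j, hj, pc t, hV t ht, ?_⟩
  have := hiter t
  rw [hts, hsx] at this
  exact this.symm

lemma negconj_iter (g : S1 → S1) (m : ℕ) (y : S1) :
    (fun w => -g (-w))^[m] y = -(g^[m] (-y)) := by
  induction m with
  | zero => simp
  | succ m ih =>
    rw [Function.iterate_succ_apply', ih, Function.iterate_succ_apply']
    simp

lemma surj_of_lift (G : ℝ → ℝ) (hc : Continuous G) (h1 : ∀ t, G (t + 1) = G t + 1) :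
    Function.Surjective G := by
  intro y
  obtain ⟨n, hn⟩ := exists_nat_ge (max (G y - y) (y - G y))
  have h2 := add_int_comm G h1
  have hu : G (y - n) ≤ y := by
    have := h2 (-n) y
    push_cast at this
    have he : y + -(n : ℝ) = y - n := by ring
    rw [he] at this
    have := le_max_left (G y - y) (y - G y)
    linarith [le_trans (le_max_left (G y - y) (y - G y)) hn]
  have hv : y ≤ G (y + n) := by
    have := h2 n y
    push_cast at this
    linarith [le_trans (le_max_right (G y - y) (y - G y)) hn]
  have hle : y - (n : ℝ) ≤ y + n := by
    have : (0:ℝ) ≤ n := Nat.cast_nonneg n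
    linarith
  obtain ⟨t, _, ht⟩ := intermediate_value_Icc hle hc.continuousOn ⟨hu, hv⟩
  exact ⟨t, ht⟩

lemma dich (G : ℝ → ℝ) (hc : Continuous G) (hne : ∀ t, G t ≠ t) :
    (∀ t, t < G t) ∨ (∀ t, G t < t) := by
  by_contra h
  push_neg at h
  obtain ⟨⟨t₁, h₁⟩, ⟨t₂, h₂⟩⟩ := h
  have h₁' : G t₁ < t₁ := lt_of_le_of_ne h₁ (hne t₁)
  have h₂' : t₂ < G t₂ := lt_of_le_of_ne h₂ (fun h => hne t₂ h.symm)
  set φ : ℝ → ℝ := fun t => G t - t with hφ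
  have hφc : Continuous φ := hc.sub continuous_id
  rcases le_total t₁ t₂ with h12 | h21
  · obtain ⟨t, _, ht⟩ := intermediate_value_Icc h12 hφc.continuousOn
      (⟨by simp [hφ]; linarith, by simp [hφ]; linarith⟩ : (0:ℝ) ∈ Icc (φ t₁) (φ t₂))
    exact hne t (by simp [hφ] at ht; linarith)
  · obtain ⟨t, _, ht⟩ := intermediate_value_Icc' h21 hφc.continuousOn
      (⟨by simp [hφ]; linarith, by simp [hφ]; linarith⟩ : (0:ℝ) ∈ Icc (φ t₁) (φ t₂))
    exact hne t (by simp [hφ] at ht; linarith)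

/-- Master lemma: any nonwandering point is in the closure of arbitrarily late tails of
both the forward and the backward orbit of every point. -/
lemma master (f : S1 ≃ₜ S1) (hor : OrientationPreserving f) (hnp : NoPeriodicPoint f)
    (x z : S1) (hz : IsNonwandering f z) (V : Set S1) (hV : V ∈ nhds z) (n : ℕ) :
    (∃ m ≥ n, (⇑f)^[m] x ∈ V) ∧ (∃ m ≥ n, (⇑f.symm)^[m] x ∈ V) := by
  classical
  obtain ⟨F, hFm, hFc, hF1, hFf⟩ := hor
  obtain ⟨ζ, hζ⟩ : ∃ ζ : ℝ, pc ζ = z := QuotientAddGroup.mk_surjective z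
  have hcont : Continuous pc := AddCircle.continuous_mk' 1
  have hWnhds : pc ⁻¹' V ∈ nhds ζ := hcont.continuousAt.preimage_mem_nhds (hζ ▸ hV)
  obtain ⟨ε, hε, hball⟩ := Metric.mem_nhds_iff.1 hWnhds
  have hIoo : ∀ t ∈ Ioo (ζ - ε) (ζ + ε), pc t ∈ V := fun t ht =>
    hball (by rw [Real.ball_eq_Ioo]; exact ht)
  set U : Set S1 := pc '' Ioo (ζ - ε) (ζ + ε) with hU
  have hUnhds : U ∈ nhds z := by
    have hop : IsOpen U := QuotientAddGroup.isOpenMap_coe _ isOpen_Ioo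
    exact hop.mem_nhds ⟨ζ, ⟨by linarith, by linarith⟩, hζ⟩
  obtain ⟨k, hk0, w, ⟨⟨u', hu'U, hu'w⟩, hwU⟩⟩ := hz U hUnhds
  -- normalize to a positive return time
  obtain ⟨K, hK1, u, huU, hfKu⟩ : ∃ K : ℕ, 1 ≤ K ∧ ∃ u ∈ U, (⇑f)^[K] u ∈ U := by
    rcases le_or_gt 0 k with hk | hk
    · refine ⟨k.toNat, by omega, u', hu'U, ?_⟩
      rw [zIter, if_pos hk] at hu'w
      rw [hu'w]; exact hwU
    · refine ⟨(-k).toNat, by omega, w, hwU, ?_⟩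
      rw [zIter, if_neg (by omega)] at hu'w
      have hli : Function.LeftInverse (⇑f) (⇑f.symm) := fun y => f.apply_symm_apply y
      have := (hli.iterate ((-k).toNat)) u'
      rw [← hu'w, this]; exact hu'U
  obtain ⟨a, haI, hau⟩ := huU
  obtain ⟨b, hbI, hbu⟩ := hfKu
  -- semiconjugacy of the lift
  have hπF : ∀ t : ℝ, pc (F t) = f (pc t) := fun t => (hFf t).symm
  have hsemiF : Function.Semiconj pc F ⇑f := hπF
  have hπFK : ∀ t : ℝ, pc (F^[K] t) = (⇑f)^[K] (pc t) := fun t => (hsemiF.iterate_right K) t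
  -- the integer correction
  obtain ⟨M, hM⟩ : ∃ M : ℤ, (M : ℝ) = b - F^[K] a := by
    have heq : pc b = pc (F^[K] a) := by rw [hbu, hπFK, hau]
    have h0 : ((b - F^[K] a : ℝ) : S1) = 0 := by
      have : ((b - F^[K] a : ℝ) : S1) = pc b - pc (F^[K] a) := rfl
      rw [this, heq, sub_self]
    rw [AddCircle.coe_eq_zero_iff] at h0
    obtain ⟨m, hm⟩ := h0
    exact ⟨m, by rw [← hm]; simp⟩
  set G : ℝ → ℝ := fun t => F^[K] t + M with hGdef
  have hGa : G a = b := by rw [hGdef]; simp only []; linarith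
  have hFKc : Continuous (F^[K]) := hFc.iterate K
  have hGc : Continuous G := by rw [hGdef]; exact hFKc.add continuous_const
  have hGm : StrictMono G := fun s t h => by
    have := (hFm.iterate K) h
    simp only [hGdef]
    linarith
  have hFK1 : ∀ t, F^[K] (t + 1) = F^[K] t + 1 := iter_add_one F hF1 K
  have hG1 : ∀ t, G (t + 1) = G t + 1 := fun t => by
    simp only [hGdef]; rw [hFK1]; ring
  have hGsc : ∀ t : ℝ, pc (G t) = (⇑f)^[K] (pc t) := fun t => by
    have : pc (G t) = pc (F^[K] t + (M : ℝ)) := rfl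
    rw [this, pc_add_int, hπFK]
  have hGne : ∀ t, G t ≠ t := by
    intro t ht
    exact hnp (pc t) K hK1 (by rw [← hGsc t, ht])
  -- the inverse lift
  have hGsurj : Function.Surjective G := surj_of_lift G hGc hG1
  set e : ℝ ≃o ℝ := StrictMono.orderIsoOfSurjective G hGm hGsurj with hedef
  set H : ℝ → ℝ := fun t => e.symm t with hHdef
  have hGH : ∀ t, G (H t) = t := fun t => e.apply_symm_apply t
  have hHG : ∀ t, H (G t) = t := fun t => e.symm_apply_apply t
  have hHc : Continuous H := OrderIso.continuous e.symm
  have hGm1 : ∀ t, G (t - 1) = G t - 1 := fun t => by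
    have := hG1 (t - 1); rw [show t - 1 + 1 = t by ring] at this; linarith
  have hH1 : ∀ t, H (t + 1) = H t + 1 := by
    intro t
    have h1' : G (H (t + 1) - 1) = t := by rw [hGm1, hGH]; ring
    have h2' : G (H t) = t := hGH t
    have := hGm.injective (h1'.trans h2'.symm)
    linarith
  have hfli : Function.LeftInverse (⇑f.symm) (⇑f) := fun y => f.symm_apply_apply y
  have hfli' : Function.LeftInverse (⇑f) (⇑f.symm) := fun y => f.apply_symm_apply y
  have hHsc : ∀ t : ℝ, pc (H t) = (⇑f.symm)^[K] (pc t) := by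
    intro t
    have h2 : pc t = (⇑f)^[K] (pc (H t)) := by rw [← hGsc, hGH]
    rw [h2, (hfli.iterate K) (pc (H t))]
  have haIcc : ∀ t, t ∈ Icc (min a b) (max a b) → pc t ∈ V := by
    intro t ht
    refine hIoo t ⟨?_, ?_⟩
    · have := le_min haI.1.le hbI.1.le
      have h3 := lt_min haI.1 hbI.1
      exact lt_of_lt_of_le h3 ht.1
    · have h3 := max_lt haI.2 hbI.2
      exact lt_of_le_of_lt ht.2 h3
  -- the two dichotomy cases
  rcases dich G hGc hGne with hgt | hltG
  · -- G > id : a < b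
    have hab : a < b := by rw [← hGa]; exact hgt a
    constructor
    · -- forward orbit: use Ĥ = -H(-·) which is > id and lifts the conjugate of f.symm
      have hHlt : ∀ t, H t < t := fun t => by
        have := hgt (H t); rwa [hGH] at this
      set Gh : ℝ → ℝ := fun t => -H (-t) with hGhdef
      have hGhc : Continuous Gh := (hHc.comp continuous_neg).neg
      have hGh1 : ∀ t, Gh (t + 1) = Gh t + 1 := by
        intro t
        have := hH1 (-t - 1)
        rw [show -t - 1 + 1 = -t by ring] at this
        simp only [hGhdef]
        rw [show -(t + 1) = -t - 1 by ring]
        linarith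
      have hGhlt : ∀ t, t < Gh t := fun t => by
        have := hHlt (-t); simp only [hGhdef]; linarith
      set gg' : S1 → S1 := fun w => -((⇑f.symm)^[K] (-w)) with hgg'def
      have hGhsc : ∀ t : ℝ, pc (Gh t) = gg' (pc t) := by
        intro t
        have h3 : pc (H (-t)) = (⇑f.symm)^[K] (pc (-t)) := hHsc (-t)
        have : pc (Gh t) = -pc (H (-t)) := rfl
        rw [this, h3, pc_neg]
      have hGhb : Gh (-b) = -a := by
        simp only [hGhdef, neg_neg]; rw [← hGa, hHG]
      have hVn : ∀ t ∈ Icc (-b) (Gh (-b)), pc t ∈ (fun w : S1 => -w) ⁻¹' V := by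
        rw [hGhb]
        intro t ht
        have hmem : -t ∈ Icc (min a b) (max a b) := by
          constructor
          · rw [min_eq_left hab.le]; linarith [ht.2]
          · rw [max_eq_right hab.le]; linarith [ht.1]
        have := haIcc (-t) hmem
        rw [pc_neg] at this
        exact this
      obtain ⟨j, hj, y, hy, hyx⟩ := lemF gg' Gh hGhc hGh1 hGhlt hGhsc (-b) _ hVn (-x) n
      have hconj : gg'^[j] y = -(((⇑f.symm)^[K])^[j] (-y)) := negconj_iter _ j y
      have h4 : ((⇑f.symm)^[K])^[j] (-y) = x := by
        have := hconj.symm.trans hyx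
        exact neg_injective this
      rw [← Function.iterate_mul] at h4
      refine ⟨K * j, le_trans hj (Nat.le_mul_of_pos_left j (by omega)), ?_⟩
      have h5 : (⇑f)^[K * j] x = -y := by
        rw [← h4, (hfli'.iterate (K * j)) (-y)]
      rw [h5]
      exact hy
    · -- backward orbit: lemF directly with G
      have hVa : ∀ t ∈ Icc a (G a), pc t ∈ V := by
        rw [hGa]
        intro t ht
        exact haIcc t ⟨by rw [min_eq_left hab.le]; exact ht.1,
          by rw [max_eq_right hab.le]; exact ht.2⟩
      obtain ⟨j, hj, y, hy, hyx⟩ := lemF ((⇑f)^[K]) G hGc hG1 hgt hGsc a V hVa x n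
      rw [← Function.iterate_mul] at hyx
      refine ⟨K * j, le_trans hj (Nat.le_mul_of_pos_left j (by omega)), ?_⟩
      have h5 : (⇑f.symm)^[K * j] x = y := by
        rw [← hyx, (hfli.iterate (K * j)) y]
      rw [h5]
      exact hy
  · -- G < id : b < a
    have hab : b < a := by rw [← hGa]; exact hltG a
    constructor
    · -- forward orbit: use H directly (H > id, lifts f.symm^[K])
      have hHgt : ∀ t, t < H t := fun t => by
        have := hltG (H t); rwa [hGH] at this
      have hHb : H b = a := by rw [← hGa, hHG]
      have hVb : ∀ t ∈ Icc b (H b), pc t ∈ V := by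
        rw [hHb]
        intro t ht
        exact haIcc t ⟨by rw [min_eq_right hab.le]; exact ht.1,
          by rw [max_eq_left hab.le]; exact ht.2⟩
      obtain ⟨j, hj, y, hy, hyx⟩ := lemF ((⇑f.symm)^[K]) H hHc hH1 hHgt hHsc b V hVb x n
      rw [← Function.iterate_mul] at hyx
      refine ⟨K * j, le_trans hj (Nat.le_mul_of_pos_left j (by omega)), ?_⟩
      have h5 : (⇑f)^[K * j] x = y := by
        rw [← hyx, (hfli'.iterate (K * j)) y]
      rw [h5]
      exact hy
    · -- backward orbit: use Ĝ = -G(-·) which is > id and lifts the conjugate of f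
      set Gh : ℝ → ℝ := fun t => -G (-t) with hGhdef
      have hGhc : Continuous Gh := (hGc.comp continuous_neg).neg
      have hGh1 : ∀ t, Gh (t + 1) = Gh t + 1 := by
        intro t
        have := hG1 (-t - 1)
        rw [show -t - 1 + 1 = -t by ring] at this
        simp only [hGhdef]
        rw [show -(t + 1) = -t - 1 by ring]
        linarith
      have hGhlt : ∀ t, t < Gh t := fun t => by
        have := hltG (-t); simp only [hGhdef]; linarith
      set gg' : S1 → S1 := fun w => -((⇑f)^[K] (-w)) with hgg'def
      have hGhsc : ∀ t : ℝ, pc (Gh t) = gg' (pc t) := by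
        intro t
        have h3 : pc (G (-t)) = (⇑f)^[K] (pc (-t)) := hGsc (-t)
        have : pc (Gh t) = -pc (G (-t)) := rfl
        rw [this, h3, pc_neg]
      have hGha : Gh (-a) = -b := by
        simp only [hGhdef, neg_neg]; rw [hGa]
      have hVn : ∀ t ∈ Icc (-a) (Gh (-a)), pc t ∈ (fun w : S1 => -w) ⁻¹' V := by
        rw [hGha]
        intro t ht
        have hmem : -t ∈ Icc (min a b) (max a b) := by
          constructor
          · rw [min_eq_right hab.le]; linarith [ht.2]
          · rw [max_eq_left hab.le]; linarith [ht.1]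
        have := haIcc (-t) hmem
        rw [pc_neg] at this
        exact this
      obtain ⟨j, hj, y, hy, hyx⟩ := lemF gg' Gh hGhc hGh1 hGhlt hGhsc (-a) _ hVn (-x) n
      have hconj : gg'^[j] y = -(((⇑f)^[K])^[j] (-y)) := negconj_iter _ j y
      have h4 : ((⇑f)^[K])^[j] (-y) = x := by
        have := hconj.symm.trans hyx
        exact neg_injective this
      rw [← Function.iterate_mul] at h4
      refine ⟨K * j, le_trans hj (Nat.le_mul_of_pos_left j (by omega)), ?_⟩
      have h5 : (⇑f.symm)^[K * j] x = -y := by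
        rw [← h4, (hfli.iterate (K * j)) (-y)]
      rw [h5]
      exact hy

end CircleAux

open CircleAux Set in
theorem nonwanderingSet_eq_omegaSet_eq_alphaSet (f : S1 ≃ₜ S1)
    (hor : OrientationPreserving f) (hnp : NoPeriodicPoint f) (x : S1) :
    nonwanderingSet f = omegaSet f x ∧ nonwanderingSet f = alphaSet f x := by
  have homega : nonwanderingSet f ⊆ omegaSet f x := by
    intro z hz
    rw [omegaSet, Set.mem_iInter]
    intro n
    rw [mem_closure_iff_nhds]
    intro U hU
    obtain ⟨⟨m, hm, hmem⟩, -⟩ := master f hor hnp x z hz U hU n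
    exact ⟨(⇑f)^[m] x, hmem, m, hm, rfl⟩
  have halpha : nonwanderingSet f ⊆ alphaSet f x := by
    intro z hz
    rw [alphaSet, Set.mem_iInter]
    intro n
    rw [mem_closure_iff_nhds]
    intro U hU
    obtain ⟨-, ⟨m, hm, hmem⟩⟩ := master f hor hnp x z hz U hU n
    exact ⟨(⇑f.symm)^[m] x, hmem, m, hm, rfl⟩
  have homega' : omegaSet f x ⊆ nonwanderingSet f := by
    intro z hz U hU
    rw [omegaSet, Set.mem_iInter] at hz
    have h0 := (mem_closure_iff_nhds.1 (hz 0)) U hU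
    obtain ⟨y₁, hy₁U, k₁, -, hk₁⟩ := h0
    have h1 := (mem_closure_iff_nhds.1 (hz (k₁ + 1))) U hU
    obtain ⟨y₂, hy₂U, k₂, hk₂ge, hk₂⟩ := h1
    refine ⟨(k₂ : ℤ) - k₁, by omega, y₂, ⟨y₁, hy₁U, ?_⟩, hy₂U⟩
    rw [zIter, if_pos (by omega)]
    have htn : ((k₂ : ℤ) - k₁).toNat = k₂ - k₁ := by omega
    rw [htn, ← hk₁, ← Function.iterate_add_apply, Nat.sub_add_cancel (by omega)]
    exact hk₂
  have halpha' : alphaSet f x ⊆ nonwanderingSet f := by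
    intro z hz U hU
    rw [alphaSet, Set.mem_iInter] at hz
    have h0 := (mem_closure_iff_nhds.1 (hz 0)) U hU
    obtain ⟨y₁, hy₁U, k₁, -, hk₁⟩ := h0
    have h1 := (mem_closure_iff_nhds.1 (hz (k₁ + 1))) U hU
    obtain ⟨y₂, hy₂U, k₂, hk₂ge, hk₂⟩ := h1
    refine ⟨(k₁ : ℤ) - k₂, by omega, y₂, ⟨y₁, hy₁U, ?_⟩, hy₂U⟩
    rw [zIter, if_neg (by omega)]
    have htn : (-((k₁ : ℤ) - k₂)).toNat = k₂ - k₁ := by omega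
    rw [htn, ← hk₁, ← Function.iterate_add_apply, Nat.sub_add_cancel (by omega)]
    exact hk₂
  exact ⟨Set.Subset.antisymm homega homega', Set.Subset.antisymm halpha halpha'⟩
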